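/- Let E = (e_n : n ∈ ℕ) be a Leja sequence for the closed unit disk D with e_0 = 1, and let d ≥ 2 with binary expansion d = 2^{n_0} + 2^{n_1} + ⋯ + 2^{n_r}, where n_0 > n_1 > ⋯ > n_r ≥ 0. Then for every 0 ≤ s ≤ d−1, ∏_{m=0, m≠s}^{d−1} |e_s − e_m| ≥ 2^r. -/

import Mathlib

open Finset

/-- `e` is a Leja sequence for the closed unit disk `D` with `e 0 = 1`: all points lie in `D`
and for every `d ≥ 1` the product `∏_{j<d} |z - e j|` over `z ∈ D` is maximized at `z = e d`. -/
def IsLejaSeq (e : ℕ → ℂ) : Prop :=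
  e 0 = 1 ∧ (∀ n, ‖e n‖ ≤ 1) ∧
    ∀ d : ℕ, 1 ≤ d → ∀ z : ℂ, ‖z‖ ≤ 1 →
      ∏ j ∈ Finset.range d, ‖z - e j‖ ≤
        ∏ j ∈ Finset.range d, ‖e d - e j‖

namespace Leja12

noncomputable section

/-- Partial sums of block sizes. -/
def Dsum (n : ℕ → ℕ) (i : ℕ) : ℕ := ∑ j ∈ Finset.range i, 2 ^ (n j)

/-- The block structure of a Leja section: the section of length `Dsum n (r+1)` splits into
blocks, block `i` being a rotated copy (by `σ i`) of the full set of `2^(n i)`-th roots of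
unity, with the chain relations between consecutive rotations. -/
structure Struct (e : ℕ → ℂ) (r : ℕ) (n : ℕ → ℕ) (σ : ℕ → ℂ) : Prop where
  unim : ∀ i ≤ r, ‖σ i‖ = 1
  chain : ∀ i < r, (σ (i+1)) ^ (2^(n i)) = -((σ i) ^ (2^(n i)))
  blocks : ∀ i ≤ r, ∀ z : ℂ,
    ∏ m ∈ Finset.Ico (Dsum n i) (Dsum n (i+1)), (z - e m)
      = z ^ (2^(n i)) - (σ i) ^ (2^(n i))

lemma Dsum_succ (n : ℕ → ℕ) (i : ℕ) : Dsum n (i+1) = Dsum n i + 2^(n i) := by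
  simp [Dsum, Finset.sum_range_succ]

lemma Dsum_zero (n : ℕ → ℕ) : Dsum n 0 = 0 := by simp [Dsum]

lemma Dsum_mono (n : ℕ → ℕ) {a b : ℕ} (h : a ≤ b) : Dsum n a ≤ Dsum n b := by
  unfold Dsum
  exact Finset.sum_le_sum_of_subset (Finset.range_subset_range.mpr h)

lemma Dsum_lt (n : ℕ → ℕ) {a b : ℕ} (h : a < b) : Dsum n a < Dsum n b := by
  have h1 : Dsum n (a+1) ≤ Dsum n b := Dsum_mono n h
  have h2 := Dsum_succ n a
  have : 0 < 2^(n a) := Nat.pow_pos (by norm_num)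
  omega

/-- strict antitonicity of the exponents -/
lemma n_lt {r : ℕ} {n : ℕ → ℕ} (hdec : ∀ j < r, n (j+1) < n j) :
    ∀ j ≤ r, ∀ i < j, n j < n i := by
  intro j
  induction j with
  | zero => intro _ i hi; omega
  | succ j ih =>
    intro hj i hi
    have h1 : n (j+1) < n j := hdec j (by omega)
    rcases Nat.lt_succ_iff_lt_or_eq.mp hi with h | h
    · exact lt_trans h1 (ih (by omega) i h)
    · subst h; exact h1

lemma neg_pow_two_pow (x : ℂ) {m : ℕ} (hm : 1 ≤ m) : (-x)^(2^m) = x^(2^m) := by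
  obtain ⟨t, rfl⟩ : ∃ t, m = t + 1 := ⟨m - 1, by omega⟩
  have h : 2^(t+1) = 2 * 2^t := by ring
  rw [h, pow_mul, pow_mul, neg_sq]

lemma pow_two_pow_sub (x : ℂ) {a b : ℕ} (h : b ≤ a) : (x^(2^b))^(2^(a-b)) = x^(2^a) := by
  rw [← pow_mul, ← pow_add, Nat.add_sub_cancel' h]

/-- Iterated chain relation : `σ j ^ (2^(n i)) = -(σ i ^ (2^(n i)))` for `i < j ≤ r`. -/
lemma chain_pow {e : ℕ → ℂ} {r : ℕ} {n : ℕ → ℕ} {σ : ℕ → ℂ}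
    (st : Struct e r n σ) (hdec : ∀ j < r, n (j+1) < n j) :
    ∀ j ≤ r, ∀ i < j, (σ j)^(2^(n i)) = -((σ i)^(2^(n i))) := by
  intro j
  induction j with
  | zero => intro _ i hi; omega
  | succ j ih =>
    intro hj i hi
    rcases Nat.lt_succ_iff_lt_or_eq.mp hi with h | h
    · -- i < j
      have hnj : n j < n i := n_lt hdec j (by omega) i h
      have h1 : (σ (j+1))^(2^(n j)) = -((σ j)^(2^(n j))) := st.chain j (by omega)
      have h2 : ((σ (j+1))^(2^(n j)))^(2^(n i - n j)) = (σ (j+1))^(2^(n i)) :=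
        pow_two_pow_sub _ (le_of_lt hnj)
      rw [← h2, h1, neg_pow_two_pow _ (by omega), pow_two_pow_sub _ (le_of_lt hnj)]
      exact ih (by omega) i h
    · subst h; exact st.chain i (by omega)

/-- The product over a union of consecutive blocks. -/
lemma blockProd {e : ℕ → ℂ} {r : ℕ} {n : ℕ → ℕ} {σ : ℕ → ℂ}
    (st : Struct e r n σ) :
    ∀ b ≤ r + 1, ∀ a ≤ b, ∀ z : ℂ,
      ∏ m ∈ Finset.Ico (Dsum n a) (Dsum n b), (z - e m)
        = ∏ i ∈ Finset.Ico a b, (z ^ (2^(n i)) - (σ i) ^ (2^(n i))) := by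
  intro b
  induction b with
  | zero => intro _ a ha z; interval_cases a; simp
  | succ b ih =>
    intro hb a ha z
    rcases Nat.lt_succ_iff_lt_or_eq.mp (Nat.lt_succ_of_le ha) with h | h
    · have hab : a ≤ b := by omega
      rw [← Finset.prod_Ico_consecutive _ (Dsum_mono n hab) (Dsum_mono n (Nat.le_succ b)),
        ih (by omega) a hab z, st.blocks b (by omega) z,
        Finset.prod_Ico_succ_top hab]
    · subst h; simp
  
/-- `|a^(2^m) - b^(2^m)| ≤ 2^m * |a - b|` for points of the closed disk. -/
lemma abs_pow_sub_pow {a b : ℂ} (ha : ‖a‖ ≤ 1) (hb : ‖b‖ ≤ 1) (m : ℕ) :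
    ‖a^(2^m) - b^(2^m)‖ ≤ 2^m * ‖a - b‖ := by
  induction m with
  | zero => simp
  | succ m ih =>
    have h2 : (2:ℕ)^(m+1) = 2^m * 2 := by ring
    rw [h2, pow_mul, pow_mul]
    have key : (a^(2^m))^2 - (b^(2^m))^2 = (a^(2^m) - b^(2^m)) * (a^(2^m) + b^(2^m)) := by ring
    rw [key, norm_mul]
    have hxa : ‖a^(2^m)‖ ≤ 1 := by
      rw [norm_pow]; exact pow_le_one₀ (norm_nonneg a) ha
    have hxb : ‖b^(2^m)‖ ≤ 1 := by
      rw [norm_pow]; exact pow_le_one₀ (norm_nonneg b) hb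
    have hsum : ‖a^(2^m) + b^(2^m)‖ ≤ 2 := by
      calc ‖a^(2^m) + b^(2^m)‖ ≤ _ := norm_add_le _ _
        _ ≤ 2 := by linarith
    calc ‖a^(2^m) - b^(2^m)‖ * ‖a^(2^m) + b^(2^m)‖
        ≤ (2^m * ‖a - b‖) * 2 := by
          apply mul_le_mul ih hsum (norm_nonneg _)
          positivity
      _ = 2^(m+1) * ‖a - b‖ := by ring

/-- Equality case of the triangle inequality on the disk. -/
lemma eq_neg_of_abs_sub_eq_two {a b : ℂ} (ha : ‖a‖ ≤ 1) (hb : ‖b‖ = 1)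
    (h : 2 ≤ ‖a - b‖) : a = -b := by
  set w : ℂ := a * (starRingEnd ℂ) b with hw
  have habsw : ‖w‖ ≤ 1 := by
    rw [hw, norm_mul, Complex.norm_conj, hb, mul_one]; exact ha
  have hb0 : b ≠ 0 := by
    intro h0; rw [h0] at hb; simp at hb
  have hwm1 : ‖w - 1‖ = ‖a - b‖ := by
    have : w - 1 = (a - b) * (starRingEnd ℂ) b := by
      rw [hw]
      have : b * (starRingEnd ℂ) b = (Complex.normSq b : ℂ) := Complex.mul_conj b
      rw [sub_mul, this]
      have : Complex.normSq b = 1 := by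
        rw [← Complex.sq_norm, hb]; norm_num
      rw [this]; push_cast; ring
    rw [this, norm_mul, Complex.norm_conj, hb, mul_one]
  have h2 : 2 ≤ ‖w - 1‖ := by rw [hwm1]; exact h
  have h4 : 4 ≤ Complex.normSq (w - 1) := by
    have := Complex.sq_norm (w - 1)
    nlinarith [norm_nonneg (w-1)]
  have hns : Complex.normSq w ≤ 1 := by
    have := Complex.sq_norm w
    nlinarith [norm_nonneg w]
  have hre : w.re = -1 ∧ w.im = 0 := by
    have e1 : Complex.normSq (w - 1) = (w.re - 1)^2 + w.im^2 := by
      simp [Complex.normSq_apply, Complex.sub_re, Complex.sub_im]; ring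
    have e2 : Complex.normSq w = w.re^2 + w.im^2 := by
      simp [Complex.normSq_apply]; ring
    constructor <;> nlinarith
  have hweq : w = -1 := by
    apply Complex.ext
    · simp [hre.1]
    · simp [hre.2]
  -- a * conj b = -1  ⇒  a = -b
  have := congrArg (· * b) hweq
  simp only [hw] at this
  have hcb : (starRingEnd ℂ) b * b = (Complex.normSq b : ℂ) := by
    rw [mul_comm]; exact Complex.mul_conj b
  have hnb : Complex.normSq b = 1 := by rw [← Complex.sq_norm, hb]; norm_num
  calc a = a * ((starRingEnd ℂ) b * b) := by rw [hcb, hnb]; simp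
    _ = a * (starRingEnd ℂ) b * b := by ring
    _ = -1 * b := by rw [← hw, hweq]
    _ = -b := by ring


/-- Core step: for a Leja sequence whose initial `Dsum n (r+1)` points have the block
structure, the next point `e d` satisfies `(e d)^(2^(n i)) = -(σ i)^(2^(n i))` for all
`i ≤ r`, and is unimodular. -/
lemma core {e : ℕ → ℂ} {r : ℕ} {n : ℕ → ℕ} {σ : ℕ → ℂ}
    (he : IsLejaSeq e) (hdec : ∀ j < r, n (j+1) < n j) (st : Struct e r n σ) :
    (∀ i ≤ r, (e (Dsum n (r+1)))^(2^(n i)) = -((σ i)^(2^(n i)))) ∧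
      ‖e (Dsum n (r+1))‖ = 1 := by
  set d := Dsum n (r+1) with hd
  have hd1 : 1 ≤ d := by
    have := Dsum_lt n (show 0 < r+1 by omega)
    rw [Dsum_zero] at this; omega
  set τ : ℂ := Complex.exp ((Real.pi / 2^(n r) : ℝ) * Complex.I) with hτdef
  have habsτ : ‖τ‖ = 1 := Complex.norm_exp_ofReal_mul_I _
  have hτ : τ^(2^(n r)) = -1 := by
    rw [hτdef, ← Complex.exp_nat_mul]
    rw [show ((2^(n r) : ℕ) : ℂ) * (((Real.pi / 2^(n r) : ℝ) : ℂ) * Complex.I)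
        = (Real.pi : ℂ) * Complex.I by
      push_cast
      have h2 : ((2:ℂ))^(n r) ≠ 0 := pow_ne_zero _ two_ne_zero
      field_simp]
    exact Complex.exp_pi_mul_I
  have hτi : ∀ i < r, τ^(2^(n i)) = 1 := by
    intro i hi
    have hni : n r < n i := n_lt hdec r le_rfl i hi
    rw [← pow_two_pow_sub τ (le_of_lt hni), hτ,
      show ((-1 : ℂ)) = -(1:ℂ)^(2^(n r)) by simp,
      neg_pow_two_pow _ (show 1 ≤ n i - n r by omega)]
    simp
  set z : ℂ := σ r * τ with hzdef
  have habsz : ‖z‖ = 1 := by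
    rw [hzdef, norm_mul, st.unim r le_rfl, habsτ, mul_one]
  have hz : ∀ i ≤ r, z^(2^(n i)) = -((σ i)^(2^(n i))) := by
    intro i hi
    rcases Nat.lt_or_ge i r with h | h
    · rw [hzdef, mul_pow, hτi i h, mul_one]
      exact chain_pow st hdec r le_rfl i h
    · have : i = r := by omega
      subst this
      rw [hzdef, mul_pow, hτ]; ring
  have hprodz : ∀ w : ℂ, ∏ m ∈ Finset.range d, (w - e m)
      = ∏ i ∈ Finset.range (r+1), (w ^ (2^(n i)) - (σ i) ^ (2^(n i))) := by
    intro w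
    have := blockProd st (r+1) le_rfl 0 (by omega) w
    rw [Dsum_zero] at this
    simpa [← Finset.range_eq_Ico] using this
  have habs_lhs : ∏ m ∈ Finset.range d, ‖z - e m‖ = 2^(r+1) := by
    rw [← norm_prod, hprodz z, norm_prod]
    rw [Finset.prod_congr rfl (show ∀ i ∈ Finset.range (r+1),
        ‖z ^ (2^(n i)) - (σ i) ^ (2^(n i))‖ = 2 from ?_)]
    · simp
    · intro i hi
      rw [hz i (by simpa using Nat.lt_succ_iff.mp (Finset.mem_range.mp hi))]
      rw [show -((σ i)^(2^(n i))) - (σ i)^(2^(n i)) = -(2 * (σ i)^(2^(n i))) by ring]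
      rw [norm_neg, norm_mul, norm_pow, st.unim i (Nat.lt_succ_iff.mp (Finset.mem_range.mp hi))]
      simp
  have hle := he.2.2 d hd1 z (le_of_eq habsz)
  rw [habs_lhs] at hle
  have habs_rhs : ∏ j ∈ Finset.range d, ‖e d - e j‖
      = ∏ i ∈ Finset.range (r+1), ‖(e d) ^ (2^(n i)) - (σ i) ^ (2^(n i))‖ := by
    rw [← norm_prod, hprodz (e d), norm_prod]
  rw [habs_rhs] at hle
  have hg2 : ∀ i ∈ Finset.range (r+1),
      ‖(e d) ^ (2^(n i)) - (σ i) ^ (2^(n i))‖ ≤ 2 := by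
    intro i hi
    have h1 : ‖(e d) ^ (2^(n i))‖ ≤ 1 := by
      rw [norm_pow]; exact pow_le_one₀ (norm_nonneg _) (he.2.1 d)
    have h2 : ‖(σ i) ^ (2^(n i))‖ = 1 := by
      rw [norm_pow, st.unim i (Nat.lt_succ_iff.mp (Finset.mem_range.mp hi))]; simp
    calc ‖(e d) ^ (2^(n i)) - (σ i) ^ (2^(n i))‖
        ≤ ‖(e d) ^ (2^(n i))‖ + ‖(σ i) ^ (2^(n i))‖ :=
          norm_sub_le _ _
      _ ≤ 2 := by rw [h2]; linarith
  have key : ∀ i ≤ r, 2 ≤ ‖(e d) ^ (2^(n i)) - (σ i) ^ (2^(n i))‖ := by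
    intro i hi
    have hmem : i ∈ Finset.range (r+1) := Finset.mem_range.mpr (by omega)
    have hsplit := Finset.mul_prod_erase (Finset.range (r+1))
      (fun i => ‖(e d) ^ (2^(n i)) - (σ i) ^ (2^(n i))‖) hmem
    have herase : ∏ j ∈ (Finset.range (r+1)).erase i,
        ‖(e d) ^ (2^(n j)) - (σ j) ^ (2^(n j))‖ ≤ 2^r := by
      have hcard : ((Finset.range (r+1)).erase i).card = r := by
        simp [Finset.card_erase_of_mem hmem]
      calc ∏ j ∈ (Finset.range (r+1)).erase i,
            ‖(e d) ^ (2^(n j)) - (σ j) ^ (2^(n j))‖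
          ≤ ∏ _j ∈ (Finset.range (r+1)).erase i, (2:ℝ) :=
            Finset.prod_le_prod (fun j _ => norm_nonneg _)
              (fun j hj => hg2 j (Finset.mem_of_mem_erase hj))
        _ = 2^r := by rw [Finset.prod_const, hcard]
    have hpos : (0:ℝ) < 2^r := by positivity
    have h1 : (2:ℝ)^(r+1) ≤ ‖(e d) ^ (2^(n i)) - (σ i) ^ (2^(n i))‖ * 2^r := by
      calc (2:ℝ)^(r+1) ≤ _ := hle
        _ = ‖(e d) ^ (2^(n i)) - (σ i) ^ (2^(n i))‖ *
            ∏ j ∈ (Finset.range (r+1)).erase i,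
              ‖(e d) ^ (2^(n j)) - (σ j) ^ (2^(n j))‖ := hsplit.symm
        _ ≤ _ := by
            apply mul_le_mul_of_nonneg_left herase (norm_nonneg _)
    have : (2:ℝ) * 2^r ≤ ‖(e d) ^ (2^(n i)) - (σ i) ^ (2^(n i))‖ * 2^r := by
      calc (2:ℝ) * 2^r = 2^(r+1) := by ring
        _ ≤ _ := h1
    exact le_of_mul_le_mul_right this hpos
  have hpt : ∀ i ≤ r, (e d)^(2^(n i)) = -((σ i)^(2^(n i))) := by
    intro i hi
    apply eq_neg_of_abs_sub_eq_two
    · rw [norm_pow]; exact pow_le_one₀ (norm_nonneg _) (he.2.1 d)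
    · rw [norm_pow, st.unim i hi]; simp
    · exact key i hi
  refine ⟨hpt, ?_⟩
  have h1 : (‖e d‖)^(2^(n r)) = 1 := by
    rw [← norm_pow, hpt r le_rfl, norm_neg, norm_pow, st.unim r le_rfl]; simp
  by_contra hne
  have hlt : ‖e d‖ < 1 := lt_of_le_of_ne (he.2.1 d) hne
  have := pow_lt_one₀ (norm_nonneg _) hlt (show 2^(n r) ≠ 0 by positivity)
  rw [h1] at this; exact lt_irrefl 1 this


lemma sum_two_pow (m : ℕ) : ∑ t ∈ Finset.range m, 2^t = 2^m - 1 := by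
  induction m with
  | zero => simp
  | succ m ih =>
    have h1 : 1 ≤ 2^m := Nat.one_le_two_pow
    rw [Finset.sum_range_succ, ih]
    have : (2:ℕ)^(m+1) = 2^m + 2^m := by ring
    omega

/-- Every Leja sequence carries the block structure, for every valid binary decomposition. -/
lemma build {e : ℕ → ℂ} (he : IsLejaSeq e) :
    ∀ d, 1 ≤ d → ∀ r n, (∀ j < r, n (j+1) < n j) → d = Dsum n (r+1) →
      ∃ σ : ℕ → ℂ, Struct e r n σ := by
  intro d
  induction d using Nat.strong_induction_on with
  | _ d ih =>
    intro hd1 r n hdec hbin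
    rcases Nat.lt_or_ge d 2 with hd2 | hd2
    · -- base case : d = 1, so r = 0 and n 0 = 0
      have hd1' : d = 1 := by omega
      have hsum : r + 1 ≤ Dsum n (r+1) := by
        have h := Finset.card_nsmul_le_sum (Finset.range (r+1)) (fun j => 2^(n j)) 1
          (fun i _ => Nat.one_le_two_pow)
        simpa [Dsum] using h
      have hr0 : r = 0 := by omega
      subst hr0
      have hn0 : n 0 = 0 := by
        have h1 : Dsum n (0+1) = 2^(n 0) := by simp [Dsum]
        have h2 : (2:ℕ)^(n 0) = 1 := by omega
        by_contra hc
        obtain ⟨t, ht⟩ : ∃ t, n 0 = t + 1 := ⟨n 0 - 1, by omega⟩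
        rw [ht] at h2
        have h3 : (2:ℕ)^(t+1) = 2 * 2^t := by ring
        have h4 : 1 ≤ (2:ℕ)^t := Nat.one_le_two_pow
        omega
      refine ⟨fun _ => 1, ?_, ?_, ?_⟩
      · intro i _; simp
      · intro i hi; omega
      · intro i hi z
        have hi0 : i = 0 := by omega
        subst hi0
        have hD0 : Dsum n 0 = 0 := Dsum_zero n
        have hD1 : Dsum n 1 = 1 := by simp [Dsum, hn0]
        rw [hD0, hD1, hn0]
        simp [he.1]
    · -- inductive step
      rcases Nat.eq_zero_or_eq_succ_pred (n r) with hnr | hnr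
      · -- trailing exponent is 0 : just append a singleton block
        have hr1 : 1 ≤ r := by
          by_contra hr
          have hr0 : r = 0 := by omega
          subst hr0
          have hD : Dsum n (0+1) = 1 := by simp [Dsum, hnr]
          omega
        obtain ⟨r', rfl⟩ : ∃ r', r = r' + 1 := ⟨r - 1, by omega⟩
        have hdec' : ∀ j < r', n (j+1) < n j := fun j hj => hdec j (by omega)
        have hbin2 : d = Dsum n (r'+2) := by rw [hbin]
        have hsum' : d - 1 = Dsum n (r'+1) := by
          have h1 : Dsum n (r'+2) = Dsum n (r'+1) + 2^(n (r'+1)) := Dsum_succ n (r'+1)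
          rw [hnr] at h1
          simp at h1
          omega
        have hd1m : 1 ≤ d - 1 := by
          have := Dsum_lt n (show 0 < r'+1 by omega)
          rw [Dsum_zero] at this
          omega
        obtain ⟨σ, st⟩ := ih (d-1) (by omega) hd1m r' n hdec' hsum'
        have hco := core he hdec' st
        rw [← hsum'] at hco
        refine ⟨fun j => if j < r'+1 then σ j else e (d-1), ?_, ?_, ?_⟩
        · intro i hi
          by_cases h : i < r'+1
          · simpa [h] using st.unim i (by omega)
          · simpa [h] using hco.2
        · intro i hi
          by_cases h : i + 1 < r'+1
          · have h2 : i < r'+1 := by omega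
            simpa [h, h2] using st.chain i (by omega)
          · have h3 : i = r' := by omega
            have h4 : ¬ (r' + 1 < r' + 1) := by omega
            have h5 : r' < r' + 1 := by omega
            rw [h3]
            simpa [h4, h5] using hco.1 r' le_rfl
        · intro i hi z
          by_cases h : i < r'+1
          · simpa [h] using st.blocks i (by omega) z
          · have h3 : i = r' + 1 := by omega
            subst h3
            have h4 : ¬ (r' + 1 < r' + 1) := by omega
            have hD : Dsum n (r'+2) = d := hbin.symm
            have hD' : Dsum n (r'+1) = d - 1 := hsum'.symm
            rw [hD, hD', hnr]
            have hico : Finset.Ico (d-1) d = {d-1} := by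
              ext x; simp only [Finset.mem_Ico, Finset.mem_singleton]; omega
            rw [hico, Finset.prod_singleton]
            simp [h4]
      · -- trailing exponent is l+1 : use structure of d-1 (run of small blocks) and merge
        obtain ⟨l, hnr⟩ : ∃ l, n r = l + 1 := ⟨n r - 1, by omega⟩
        set R := r + l with hR
        set N : ℕ → ℕ := fun j => if j < r then n j else R - j with hN
        have hNlow : ∀ j < r, N j = n j := by intro j hj; simp [hN, hj]
        have hNhigh : ∀ j, r ≤ j → N j = R - j := by
          intro j hj; simp only [hN]; rw [if_neg (by omega)]
        have hdecN : ∀ j < R, N (j+1) < N j := by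
          intro j hj
          rcases Nat.lt_or_ge (j+1) r with h | h
          · rw [hNlow j (by omega), hNlow (j+1) h]; exact hdec j (by omega)
          · rcases Nat.eq_or_lt_of_le h with h' | h'
            · -- j + 1 = r
              rw [hNlow j (by omega), hNhigh (j+1) (by omega)]
              have h2 := hdec j (by omega)
              rw [show j + 1 = r by omega, hnr] at h2
              omega
            · rw [hNhigh j (by omega), hNhigh (j+1) (by omega)]
              omega
        have hDeq : ∀ j ≤ r, Dsum N j = Dsum n j := by
          intro j hj
          unfold Dsum
          apply Finset.sum_congr rfl
          intro x hx
          rw [hNlow x (by have := Finset.mem_range.mp hx; omega)]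
        have hsumN : d - 1 = Dsum N (R+1) := by
          have hsplit : Dsum N (R+1) = Dsum N r + ∑ j ∈ Finset.Ico r (R+1), 2^(N j) := by
            unfold Dsum
            rw [Finset.range_eq_Ico, ← Finset.sum_Ico_consecutive _ (by omega : 0 ≤ r) (by omega : r ≤ R+1), Finset.range_eq_Ico]
          have htail : ∑ j ∈ Finset.Ico r (R+1), 2^(N j) = 2^(l+1) - 1 := by
            rw [Finset.sum_Ico_eq_sum_range]
            have h1 : R + 1 - r = l + 1 := by omega
            rw [h1]
            have h2 : ∀ t ∈ Finset.range (l+1), 2^(N (r+t)) = 2^(l - t) := by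
              intro t ht
              rw [hNhigh (r+t) (by omega)]
              congr 1
              omega
            rw [Finset.sum_congr rfl h2]
            have h3 := Finset.sum_range_reflect (fun t => 2^t) (l+1)
            have h4 : ∀ t ∈ Finset.range (l+1), (2:ℕ)^(l + 1 - 1 - t) = 2^(l - t) := by
              intro t ht; congr 1 <;> omega
            rw [Finset.sum_congr rfl h4] at h3
            rw [h3, sum_two_pow]
          have hd' : d = Dsum n r + 2^(l+1) := by
            rw [hbin, Dsum_succ n r, hnr]
          have h1 : 1 ≤ 2^(l+1) := Nat.one_le_two_pow
          rw [hsplit, htail, hDeq r le_rfl]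
          omega
        have hd1m : 1 ≤ d - 1 := by
          have h2 : 2 ≤ 2^(l+1) := by
            have := Nat.one_le_two_pow (n := l)
            have : (2:ℕ)^(l+1) = 2 * 2^l := by ring
            omega
          have hd' : d = Dsum n r + 2^(l+1) := by
            rw [hbin, Dsum_succ n r, hnr]
          omega
        obtain ⟨σ, st⟩ := ih (d-1) (by omega) hd1m R N hdecN hsumN
        have hco := core he hdecN st
        rw [← hsumN] at hco
        -- the merge: blocks r..R of the rep of d-1, together with e (d-1), merge into
        -- a single block of size 2^(l+1) rotated by σ r
        have merge : ∀ t, t ≤ l → ∀ z : ℂ,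
            ∏ m ∈ Finset.Ico (Dsum N (R-t)) d, (z - e m)
              = z^(2^(t+1)) - (σ (R-t))^(2^(t+1)) := by
          intro t
          induction t with
          | zero =>
            intro _ z
            have hRR : R - 0 = R := by omega
            rw [hRR]
            have hde : d = Dsum N (R+1) + 1 := by omega
            rw [hde, Finset.prod_Ico_succ_top (Dsum_mono N (by omega))]
            have hblock := st.blocks R le_rfl z
            rw [hNhigh R (by omega), show R - R = 0 by omega] at hblock
            simp only [pow_zero, pow_one] at hblock
            rw [hblock]
            have hpt := hco.1 R le_rfl
            rw [hNhigh R (by omega), show R - R = 0 by omega] at hpt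
            simp only [pow_zero, pow_one] at hpt
            rw [← hsumN, hpt]
            ring
          | succ t iht =>
            intro ht z
            have hj : r ≤ R - (t+1) := by omega
            set j := R - (t+1) with hjdef
            have hj1 : j + 1 = R - t := by omega
            have hjR : j ≤ R := by omega
            have hmono1 : Dsum N j ≤ Dsum N (j+1) := Dsum_mono N (by omega)
            have hmono2 : Dsum N (j+1) ≤ d := by
              have := Dsum_mono N (show j+1 ≤ R+1 by omega)
              omega
            rw [← Finset.prod_Ico_consecutive _ hmono1 hmono2]
            have hblock := st.blocks j (by omega) z
            rw [hNhigh j hj, show R - j = t + 1 by omega] at hblock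
            have htail := iht (by omega) z
            rw [← hj1] at htail
            rw [hblock, htail]
            have hchain := st.chain j (by omega)
            rw [hNhigh j hj, show R - j = t + 1 by omega] at hchain
            rw [hchain]
            have hzp : (z^(2^(t+1)))^2 = z^(2^(t+2)) := by
              rw [← pow_mul]; congr 1 <;> ring
            have hsp : ((σ j)^(2^(t+1)))^2 = (σ j)^(2^(t+2)) := by
              rw [← pow_mul]; congr 1 <;> ring
            calc (z ^ 2 ^ (t + 1) - σ j ^ 2 ^ (t + 1)) *
                  (z ^ 2 ^ (t + 1) - -(σ j ^ 2 ^ (t + 1)))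
                = (z^(2^(t+1)))^2 - ((σ j)^(2^(t+1)))^2 := by ring
              _ = z^(2^(t+2)) - (σ j)^(2^(t+2)) := by rw [hzp, hsp]
        refine ⟨σ, ?_, ?_, ?_⟩
        · intro i hi; exact st.unim i (by omega)
        · intro i hi
          have h1 := st.chain i (by omega)
          rw [hNlow i hi] at h1
          exact h1
        · intro i hi z
          rcases Nat.lt_or_ge i r with h | h
          · have h1 := st.blocks i (by omega) z
            rw [hNlow i h, hDeq i (by omega), hDeq (i+1) (by omega)] at h1
            exact h1
          · have hir : i = r := by omega
            subst hir
            have hm := merge l le_rfl z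
            rw [show R - l = i by omega] at hm
            rw [show Dsum n (i+1) = d from hbin.symm, ← hDeq i le_rfl, hnr]
            exact hm


lemma pow_two_pow_add (x : ℂ) (a b : ℕ) : (x^(2^a))^(2^b) = x^(2^(a+b)) := by
  rw [← pow_mul, ← pow_add]

lemma sq_two_pow (x : ℂ) (a : ℕ) : (x^(2^a))^2 = x^(2^(a+1)) := by
  rw [← pow_mul, pow_succ]

/-- The potential estimate for blocks after the block containing `s`. -/
lemma potential {e : ℕ → ℂ} {r : ℕ} {n : ℕ → ℕ} {σ : ℕ → ℂ}
    (st : Struct e r n σ) (hdec : ∀ j < r, n (j+1) < n j)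
    {k : ℕ} {w : ℂ} (habsw : ‖w‖ = 1)
    (hwk : w^(2^(n k)) = (σ k)^(2^(n k))) :
    ∀ j, k < j → j ≤ r →
      (2:ℝ)^(j+1) * 2^(n j) ≤ 2^k * 2^(n k) *
        (∏ i ∈ Finset.Ico (k+1) (j+1), ‖w^(2^(n i)) - (σ i)^(2^(n i))‖) *
        ‖w^(2^(n j)) + (σ j)^(2^(n j))‖ := by
  have habsu : ∀ a : ℕ, ‖w^(2^a)‖ ≤ 1 := by
    intro a; rw [norm_pow, habsw]; simp
  have habsc : ∀ i ≤ r, ‖(σ i)^(2^i)‖ ≤ 1 := by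
    intro i hi; rw [norm_pow, st.unim i hi]; simp
  have habsc' : ∀ i ≤ r, ∀ a : ℕ, ‖(σ i)^(2^a)‖ ≤ 1 := by
    intro i hi a; rw [norm_pow, st.unim i hi]; simp
  intro j hlt
  induction j, hlt using Nat.le_induction with
  | base =>
    intro hk1
    -- j = k + 1
    have hnlt : n (k+1) < n k := n_lt hdec (k+1) hk1 k (by omega)
    obtain ⟨m, hm⟩ : ∃ m, n k = n (k+1) + 1 + m := ⟨n k - n (k+1) - 1, by omega⟩
    set u : ℂ := w^(2^(n (k+1))) with hu
    set c : ℂ := (σ (k+1))^(2^(n (k+1))) with hc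
    have h1 : (u^2)^(2^m) = (σ k)^(2^(n k)) := by
      rw [hu, sq_two_pow, pow_two_pow_add, show n (k+1) + 1 + m = n k by omega, hwk]
    have h2 : (c^2)^(2^m) = -((σ k)^(2^(n k))) := by
      rw [hc, sq_two_pow, pow_two_pow_add, show n (k+1) + 1 + m = n k by omega]
      exact chain_pow st hdec (k+1) hk1 k (by omega)
    have h3 : ‖(u^2)^(2^m) - (c^2)^(2^m)‖ = 2 := by
      rw [h1, h2, sub_neg_eq_add, show (σ k)^(2^(n k)) + (σ k)^(2^(n k)) = 2 * (σ k)^(2^(n k)) by ring,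
        norm_mul, norm_pow, st.unim k (by omega)]
      simp
    have h4 : ‖u^2‖ ≤ 1 := by
      rw [hu, sq_two_pow]; exact habsu _
    have h5 : ‖c^2‖ ≤ 1 := by
      rw [hc, sq_two_pow]; exact habsc' (k+1) hk1 _
    have h6 : (2:ℝ) ≤ 2^m * ‖u^2 - c^2‖ := by
      calc (2:ℝ) = ‖(u^2)^(2^m) - (c^2)^(2^m)‖ := h3.symm
        _ ≤ 2^m * ‖u^2 - c^2‖ := abs_pow_sub_pow h4 h5 m
    have h7 : u^2 - c^2 = (u - c) * (u + c) := by ring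
    rw [h7, norm_mul] at h6
    have hIco : Finset.Ico (k+1) (k+1+1) = {k+1} := by
      ext x; simp only [Finset.mem_Ico, Finset.mem_singleton]; omega
    rw [hIco, Finset.prod_singleton, ← hu, ← hc]
    have hnk : (2:ℝ)^(n k) = 2^(n (k+1)) * 2 * 2^m := by
      rw [hm, pow_add, pow_add]; ring
    have hpos : (0:ℝ) ≤ 2^k * 2^(n (k+1)) * 2 := by positivity
    have h8 : (2^k * 2^(n (k+1)) * 2) * 2
        ≤ (2^k * 2^(n (k+1)) * 2) * (2^m * (‖u - c‖ * ‖u + c‖)) :=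
      mul_le_mul_of_nonneg_left h6 hpos
    calc (2:ℝ)^(k+1+1) * 2^(n (k+1)) = (2^k * 2^(n (k+1)) * 2) * 2 := by ring
      _ ≤ (2^k * 2^(n (k+1)) * 2) * (2^m * (‖u - c‖ * ‖u + c‖)) := h8
      _ = 2^k * (2^(n (k+1)) * 2 * 2^m) * ‖u - c‖ * ‖u + c‖ := by ring
      _ = 2^k * 2^(n k) * ‖u - c‖ * ‖u + c‖ := by rw [hnk]
  | succ j hj iht =>
    intro hj1
    -- step from j to j+1, with k < j
    have hkj : k < j := hj
    have hIH := iht (by omega)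
    have hnlt : n (j+1) < n j := n_lt hdec (j+1) hj1 j (by omega)
    obtain ⟨m, hm⟩ : ∃ m, n j = n (j+1) + 1 + m := ⟨n j - n (j+1) - 1, by omega⟩
    set u : ℂ := w^(2^(n (j+1))) with hu
    set c : ℂ := (σ (j+1))^(2^(n (j+1))) with hc
    have h1 : (u^2)^(2^m) = w^(2^(n j)) := by
      rw [hu, sq_two_pow, pow_two_pow_add, show n (j+1) + 1 + m = n j by omega]
    have h2 : (c^2)^(2^m) = -((σ j)^(2^(n j))) := by
      rw [hc, sq_two_pow, pow_two_pow_add, show n (j+1) + 1 + m = n j by omega]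
      exact st.chain j (by omega)
    have h3 : w^(2^(n j)) + (σ j)^(2^(n j)) = (u^2)^(2^m) - (c^2)^(2^m) := by
      rw [h1, h2]; ring
    have h4 : ‖u^2‖ ≤ 1 := by
      rw [hu, sq_two_pow]; exact habsu _
    have h5 : ‖c^2‖ ≤ 1 := by
      rw [hc, sq_two_pow]; exact habsc' (j+1) hj1 _
    have h6 : ‖w^(2^(n j)) + (σ j)^(2^(n j))‖
        ≤ 2^m * (‖u - c‖ * ‖u + c‖) := by
      rw [h3]
      calc ‖(u^2)^(2^m) - (c^2)^(2^m)‖ ≤ 2^m * ‖u^2 - c^2‖ :=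
            abs_pow_sub_pow h4 h5 m
        _ = 2^m * (‖u - c‖ * ‖u + c‖) := by
            rw [show u^2 - c^2 = (u - c) * (u + c) by ring, norm_mul]
    set Pref : ℝ := 2^k * 2^(n k) *
        (∏ i ∈ Finset.Ico (k+1) (j+1), ‖w^(2^(n i)) - (σ i)^(2^(n i))‖) with hPref
    have hPrefnn : 0 ≤ Pref := by
      rw [hPref]
      apply mul_nonneg (by positivity)
      exact Finset.prod_nonneg (fun i _ => norm_nonneg _)
    have hsplit : ∏ i ∈ Finset.Ico (k+1) (j+1+1), ‖w^(2^(n i)) - (σ i)^(2^(n i))‖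
        = (∏ i ∈ Finset.Ico (k+1) (j+1), ‖w^(2^(n i)) - (σ i)^(2^(n i))‖) *
          ‖u - c‖ := by
      rw [Finset.prod_Ico_succ_top (by omega), hu, hc]
    have hchain2 : (2:ℝ)^(j+1) * 2^(n j) ≤ Pref * (2^m * (‖u - c‖ * ‖u + c‖)) := by
      calc (2:ℝ)^(j+1) * 2^(n j) ≤ Pref * ‖w^(2^(n j)) + (σ j)^(2^(n j))‖ := hIH
        _ ≤ Pref * (2^m * (‖u - c‖ * ‖u + c‖)) :=
            mul_le_mul_of_nonneg_left h6 hPrefnn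
    have hnj : (2:ℝ)^(n j) = 2^(n (j+1)) * 2 * 2^m := by
      rw [hm]; rw [pow_add, pow_add]; ring
    have hcancel : (2:ℝ)^(j+1+1) * 2^(n (j+1)) * 2^m
        ≤ (Pref * ‖u - c‖ * ‖u + c‖) * 2^m := by
      calc (2:ℝ)^(j+1+1) * 2^(n (j+1)) * 2^m
          = 2^(j+1) * (2^(n (j+1)) * 2 * 2^m) := by ring
        _ = 2^(j+1) * 2^(n j) := by rw [hnj]
        _ ≤ Pref * (2^m * (‖u - c‖ * ‖u + c‖)) := hchain2
        _ = (Pref * ‖u - c‖ * ‖u + c‖) * 2^m := by ring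
    have hfin := le_of_mul_le_mul_right hcancel (show (0:ℝ) < 2^m by positivity)
    rw [hsplit]
    calc (2:ℝ)^(j+1+1) * 2^(n (j+1)) ≤ Pref * ‖u - c‖ * ‖u + c‖ := hfin
      _ = 2^k * 2^(n k) *
          ((∏ i ∈ Finset.Ico (k+1) (j+1), ‖w^(2^(n i)) - (σ i)^(2^(n i))‖) *
            ‖u - c‖) * ‖u + c‖ := by rw [hPref]; ring


lemma find_block (n : ℕ → ℕ) (r s : ℕ) (hs : s < Dsum n (r+1)) :
    ∃ k ≤ r, Dsum n k ≤ s ∧ s < Dsum n (k+1) := by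
  induction r with
  | zero => exact ⟨0, le_rfl, by rw [Dsum_zero]; omega, hs⟩
  | succ r ih =>
    rcases Nat.lt_or_ge s (Dsum n (r+1)) with h | h
    · obtain ⟨k, hk, h1, h2⟩ := ih h
      exact ⟨k, by omega, h1, h2⟩
    · exact ⟨r+1, le_rfl, h, hs⟩

/-- Product over the block containing `s`, with `s` removed : this is the modulus of the
derivative of `z^N - c` at the root `e s`. -/
lemma block_erase_prod {e : ℕ → ℂ} {a b s NN : ℕ} {c : ℂ}
    (hs1 : s ∈ Finset.Ico a b)
    (hprod : ∀ z : ℂ, ∏ m ∈ Finset.Ico a b, (z - e m) = z^NN - c) :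
    ∏ m ∈ (Finset.Ico a b).erase s, (e s - e m) = (NN : ℂ) * (e s)^(NN-1) := by
  classical
  set P : Polynomial ℂ := ∏ m ∈ Finset.Ico a b, (Polynomial.X - Polynomial.C (e m)) with hP
  have hPeval : ∀ z : ℂ, P.eval z = z^NN - c := by
    intro z
    rw [hP, Polynomial.eval_prod]
    simpa using hprod z
  have hPeq : P = Polynomial.X^NN - Polynomial.C c := by
    apply Polynomial.funext
    intro z
    rw [hPeval]
    simp
  set Q : Polynomial ℂ := ∏ m ∈ (Finset.Ico a b).erase s, (Polynomial.X - Polynomial.C (e m)) with hQ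
  have hsplit : P = (Polynomial.X - Polynomial.C (e s)) * Q := by
    rw [hP, hQ, ← Finset.mul_prod_erase _ _ hs1]
  have hd : Polynomial.derivative P
      = Q + (Polynomial.X - Polynomial.C (e s)) * Polynomial.derivative Q := by
    rw [hsplit, Polynomial.derivative_mul]
    simp
  have h1 : (Polynomial.derivative P).eval (e s) = Q.eval (e s) := by
    rw [hd]
    simp
  have h2 : (Polynomial.derivative P).eval (e s) = (NN : ℂ) * (e s)^(NN-1) := by
    rw [hPeq]
    simp [Polynomial.derivative_X_pow]
  have h3 : Q.eval (e s) = ∏ m ∈ (Finset.Ico a b).erase s, (e s - e m) := by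
    rw [hQ, Polynomial.eval_prod]
    simp
  rw [← h3, ← h1, h2]


end

end Leja12

open Leja12

theorem stmt12 (e : ℕ → ℂ) (he : IsLejaSeq e) (d r : ℕ) (n : ℕ → ℕ)
    (hd : 2 ≤ d) (hdec : ∀ j < r, n (j + 1) < n j)
    (hbin : d = ∑ j ∈ Finset.range (r + 1), 2 ^ (n j))
    (s : ℕ) (hs : s < d) :
    (2 : ℝ) ^ r ≤ ∏ m ∈ (Finset.range d).erase s, ‖e s - e m‖ := by
  classical
  have hd1 : 1 ≤ d := by omega
  have hbin' : d = Dsum n (r+1) := hbin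
  obtain ⟨σ, st⟩ := build he d hd1 r n hdec hbin'
  obtain ⟨k, hk, hks1, hks2⟩ := find_block n r s (by rw [← hbin']; exact hs)
  have hsmem : s ∈ Finset.Ico (Dsum n k) (Dsum n (k+1)) := Finset.mem_Ico.mpr ⟨hks1, hks2⟩
  -- e s is a root of the k-th block polynomial
  have hesroot : (e s)^(2^(n k)) = (σ k)^(2^(n k)) := by
    have h0 : ∏ m ∈ Finset.Ico (Dsum n k) (Dsum n (k+1)), ((e s : ℂ) - e m) = 0 :=
      Finset.prod_eq_zero hsmem (by simp)
    have h1 := st.blocks k hk (e s)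
    rw [h0] at h1
    exact sub_eq_zero.mp h1.symm
  have habss : ‖e s‖ = 1 := by
    have h1 : (‖e s‖)^(2^(n k)) = 1 := by
      rw [← norm_pow, hesroot, norm_pow, st.unim k hk]
      simp
    by_contra hne
    have hlt := lt_of_le_of_ne (he.2.1 s) hne
    have := pow_lt_one₀ (norm_nonneg _) hlt (show 2^(n k) ≠ 0 by positivity)
    rw [h1] at this
    exact lt_irrefl 1 this
  -- bounds on the partial sums
  have hDk1d : Dsum n (k+1) ≤ d := by
    rw [hbin']; exact Dsum_mono n (by omega)
  have hDkk1 : Dsum n k ≤ Dsum n (k+1) := Dsum_mono n (by omega)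
  -- split the erased product into three ranges
  have hset : (Finset.range d).erase s
      = Finset.range (Dsum n k) ∪ ((Finset.Ico (Dsum n k) (Dsum n (k+1))).erase s
          ∪ Finset.Ico (Dsum n (k+1)) d) := by
    ext x
    simp only [Finset.mem_erase, Finset.mem_range, Finset.mem_union, Finset.mem_Ico]
    omega
  have hdisj2 : Disjoint ((Finset.Ico (Dsum n k) (Dsum n (k+1))).erase s)
      (Finset.Ico (Dsum n (k+1)) d) := by
    rw [Finset.disjoint_left]
    intro x hx hx2
    have h1 := Finset.mem_Ico.mp (Finset.mem_of_mem_erase hx)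
    have h2 := Finset.mem_Ico.mp hx2
    omega
  have hdisj1 : Disjoint (Finset.range (Dsum n k))
      ((Finset.Ico (Dsum n k) (Dsum n (k+1))).erase s ∪ Finset.Ico (Dsum n (k+1)) d) := by
    rw [Finset.disjoint_left]
    intro x hx hx2
    have h1 := Finset.mem_range.mp hx
    rcases Finset.mem_union.mp hx2 with h | h
    · have h2 := Finset.mem_Ico.mp (Finset.mem_of_mem_erase h)
      omega
    · have h2 := Finset.mem_Ico.mp h
      omega
  have hsplit : ∏ m ∈ (Finset.range d).erase s, ‖e s - e m‖
      = (∏ m ∈ Finset.range (Dsum n k), ‖e s - e m‖)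
        * ((∏ m ∈ (Finset.Ico (Dsum n k) (Dsum n (k+1))).erase s, ‖e s - e m‖)
          * ∏ m ∈ Finset.Ico (Dsum n (k+1)) d, ‖e s - e m‖) := by
    rw [hset, Finset.prod_union hdisj1, Finset.prod_union hdisj2]
  -- the part before block k : each earlier block contributes exactly 2
  have hA : ∏ m ∈ Finset.range (Dsum n k), ‖e s - e m‖ = 2^k := by
    have hbp := blockProd st k (by omega) 0 (by omega) (e s)
    rw [Dsum_zero] at hbp
    rw [← norm_prod, Finset.range_eq_Ico, hbp, norm_prod]
    have hfac : ∀ i ∈ Finset.Ico 0 k,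
        ‖(e s)^(2^(n i)) - (σ i)^(2^(n i))‖ = 2 := by
      intro i hi
      have hik : i < k := (Finset.mem_Ico.mp hi).2
      have hnki : n k ≤ n i := le_of_lt (n_lt hdec k hk i hik)
      have hpow : (e s)^(2^(n i)) = -((σ i)^(2^(n i))) := by
        calc (e s)^(2^(n i)) = ((e s)^(2^(n k)))^(2^(n i - n k)) := (pow_two_pow_sub _ hnki).symm
          _ = ((σ k)^(2^(n k)))^(2^(n i - n k)) := by rw [hesroot]
          _ = (σ k)^(2^(n i)) := pow_two_pow_sub _ hnki
          _ = -((σ i)^(2^(n i))) := chain_pow st hdec k hk i hik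
      rw [hpow, show -((σ i)^(2^(n i))) - (σ i)^(2^(n i)) = -(2*(σ i)^(2^(n i))) by ring,
        norm_neg, norm_mul, norm_pow, st.unim i (by omega)]
      simp
    rw [Finset.prod_congr rfl hfac, Finset.prod_const]
    simp
  -- the block containing s, with s removed : contributes 2^(n k)
  have hB : ∏ m ∈ (Finset.Ico (Dsum n k) (Dsum n (k+1))).erase s, ‖e s - e m‖
      = 2^(n k) := by
    rw [← norm_prod, block_erase_prod hsmem (st.blocks k hk), norm_mul, norm_pow,
      habss, one_pow, mul_one, Complex.norm_natCast]
    push_cast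
    ring
  -- the blocks after block k
  have hC : ∏ m ∈ Finset.Ico (Dsum n (k+1)) d, ‖e s - e m‖
      = ∏ i ∈ Finset.Ico (k+1) (r+1), ‖(e s)^(2^(n i)) - (σ i)^(2^(n i))‖ := by
    have hbp := blockProd st (r+1) (by omega) (k+1) (by omega) (e s)
    rw [← hbin'] at hbp
    rw [← norm_prod, hbp, norm_prod]
  set Pc : ℝ := ∏ i ∈ Finset.Ico (k+1) (r+1),
      ‖(e s)^(2^(n i)) - (σ i)^(2^(n i))‖ with hPc
  have hPcnn : 0 ≤ Pc := Finset.prod_nonneg (fun i _ => norm_nonneg _)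
  rw [hsplit, hA, hB, hC]
  -- final accounting
  rcases Nat.eq_or_lt_of_le hk with hkr | hkr
  · -- k = r : no later blocks
    have hempty : Finset.Ico (k+1) (r+1) = ∅ := by
      rw [hkr]; exact Finset.Ico_self _
    have hone : Pc = 1 := by rw [hPc, hempty, Finset.prod_empty]
    rw [hone]
    have h1 : (1:ℝ) ≤ 2^(n k) := one_le_pow₀ (by norm_num)
    have h2 : (2:ℝ)^r = 2^k := by rw [hkr]
    nlinarith [pow_pos (show (0:ℝ) < 2 by norm_num) k]
  · -- k < r : use the potential estimate
    have hpot := potential st hdec habss hesroot r hkr le_rfl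
    have htri : ‖(e s)^(2^(n r)) + (σ r)^(2^(n r))‖ ≤ 2 := by
      have h1 : ‖(e s)^(2^(n r))‖ = 1 := by rw [norm_pow, habss]; simp
      have h2 : ‖(σ r)^(2^(n r))‖ = 1 := by rw [norm_pow, st.unim r le_rfl]; simp
      calc ‖(e s)^(2^(n r)) + (σ r)^(2^(n r))‖
          ≤ ‖(e s)^(2^(n r))‖ + ‖(σ r)^(2^(n r))‖ :=
            norm_add_le _ _
        _ = 2 := by rw [h1, h2]; norm_num
    set T : ℝ := 2^k * 2^(n k) * Pc with hT
    have hTnn : 0 ≤ T := by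
      rw [hT]; apply mul_nonneg (by positivity) hPcnn
    have h3 : (2:ℝ)^(r+1) * 2^(n r) ≤ T * 2 := by
      calc (2:ℝ)^(r+1) * 2^(n r) ≤ T * ‖(e s)^(2^(n r)) + (σ r)^(2^(n r))‖ := hpot
        _ ≤ T * 2 := mul_le_mul_of_nonneg_left htri hTnn
    have h4 : (1:ℝ) ≤ 2^(n r) := one_le_pow₀ (by norm_num)
    have h5 : (2:ℝ)^r * 2 ≤ T * 2 := by
      calc (2:ℝ)^r * 2 = 2^(r+1) := by ring
        _ ≤ 2^(r+1) * 2^(n r) := by nlinarith [pow_pos (show (0:ℝ) < 2 by norm_num) (r+1)]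
        _ ≤ T * 2 := h3
    have := le_of_mul_le_mul_right h5 (show (0:ℝ) < 2 by norm_num)
    calc (2:ℝ)^r ≤ T := this
      _ = 2^k * (2^(n k) * Pc) := by rw [hT]; ring
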